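/- (Characterization of order-one terms.) Let (u₁,…,u_p) be a solution of the escape-region equations and let 1 ≤ j < p. Then ord(u_j) = μ (i.e. u_j = β·X^μ + higher order terms with β ≠ 0) if and only if σ_j = 0 and σ_{j+1} ≠ σ₁. In that case the leading coefficient β of u_j satisfies β² = σ₁ − σ_{j+1}; thus β = ±1 when σ₁ − σ_{j+1} = +1, and β = ±i when σ₁ − σ_{j+1} = −1. -/

import Mathlib

/-- `f` has leading term (leading monomial) `β·X^q`: the coefficient of `X^q` is `β ≠ 0`
and all lower coefficients vanish. -/
def HasLeadingTerm (f : PowerSeries ℂ) (β : ℂ) (q : ℕ) : Prop :=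
  β ≠ 0 ∧ PowerSeries.coeff q f = β ∧ ∀ n < q, PowerSeries.coeff n f = 0

/-- `(u 1, …, u p)` is a solution of the escape-region equations of period `p`
(where `X` plays the role of `𝔱^{1/μ}`, i.e. of `ξ^{1/μ}` with `ξ = 1/(3a)`):
`u p = 0` and `X^{2μ}(u_{j+1} − u₁) = u_j²(u_j − 1)` for `1 ≤ j < p`. -/
def IsEscapeSolution (p μ : ℕ) (u : ℕ → PowerSeries ℂ) : Prop :=
  u p = 0 ∧ ∀ j, 1 ≤ j → j < p →
    (PowerSeries.X : PowerSeries ℂ) ^ (2 * μ) * (u (j + 1) - u 1)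
      = (u j) ^ 2 * (u j - 1)

/-- The error `E_j(w) = X^{2μ}(w_{j+1} − w₁) − w_j²(w_j − 1)`. -/
noncomputable def Err (μ : ℕ) (w : ℕ → PowerSeries ℂ) (j : ℕ) : PowerSeries ℂ :=
  (PowerSeries.X : PowerSeries ℂ) ^ (2 * μ) * (w (j + 1) - w 1) - (w j) ^ 2 * (w j - 1)

/-- Key computation: if the escape equation holds at index `j` and `u_j` has leading
term `β X^μ`, then `σ_{j+1} − σ₁ = −β²`. -/
lemma key_const (μ : ℕ) (hμ : 1 ≤ μ) (a b f : PowerSeries ℂ)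
    (heq : (PowerSeries.X : PowerSeries ℂ) ^ (2 * μ) * (b - a) = f ^ 2 * (f - 1))
    (β : ℂ) (hβ : HasLeadingTerm f β μ) :
    PowerSeries.constantCoeff b - PowerSeries.constantCoeff a = -β ^ 2 := by
  obtain ⟨hβ0, hcoef, hlow⟩ := hβ
  obtain ⟨v, hv⟩ := (PowerSeries.X_pow_dvd_iff).2 (fun m hm => hlow m hm)
  have hccf : PowerSeries.constantCoeff f = 0 := by
    have := hlow 0 hμ
    simpa using this
  have hccv : PowerSeries.constantCoeff v = β := by
    have h := PowerSeries.coeff_X_pow_mul v μ 0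
    rw [← hcoef, hv]
    simpa using h.symm
  have h3 : b - a = v ^ 2 * (f - 1) := by
    apply mul_left_cancel₀ (pow_ne_zero (2 * μ) (PowerSeries.X_ne_zero (R := ℂ)))
    rw [heq]
    nth_rewrite 1 [hv]
    ring
  have h4 := congrArg (PowerSeries.constantCoeff) h3
  simp only [map_sub, map_mul, map_pow, map_one, hccv, hccf] at h4
  rw [h4]; ring

theorem order_one_characterization (p μ : ℕ) (hp : 1 ≤ p) (hμ : 1 ≤ μ)
    (u : ℕ → PowerSeries ℂ) (hu : IsEscapeSolution p μ u)
    (j : ℕ) (hj1 : 1 ≤ j) (hjp : j < p) :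
    ((∃ β : ℂ, HasLeadingTerm (u j) β μ) ↔
      (PowerSeries.constantCoeff (u j) = 0 ∧
        PowerSeries.constantCoeff (u (j + 1)) ≠ PowerSeries.constantCoeff (u 1))) ∧
    (∀ β : ℂ, HasLeadingTerm (u j) β μ →
      β ^ 2 = PowerSeries.constantCoeff (u 1) - PowerSeries.constantCoeff (u (j + 1)) ∧
      (PowerSeries.constantCoeff (u 1) - PowerSeries.constantCoeff (u (j + 1)) = 1 →
        β = 1 ∨ β = -1) ∧
      (PowerSeries.constantCoeff (u 1) - PowerSeries.constantCoeff (u (j + 1)) = -1 →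
        β = Complex.I ∨ β = -Complex.I)) := by
  have heq := hu.2 j hj1 hjp
  constructor
  · constructor
    · rintro ⟨β, hβ⟩
      have hk := key_const μ hμ (u 1) (u (j + 1)) (u j) heq β hβ
      refine ⟨by simpa using hβ.2.2 0 hμ, ?_⟩
      intro h
      rw [h, sub_self] at hk
      exact hβ.1 (by have := hk.symm; simpa [neg_eq_zero, pow_eq_zero_iff] using this)
    · rintro ⟨h0, hne⟩
      have hgord : (u (j + 1) - u 1).order = ((0 : ℕ) : ℕ∞) := by
        rw [PowerSeries.order_eq_nat]
        refine ⟨?_, by omega⟩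
        simpa [PowerSeries.coeff_zero_eq_constantCoeff, map_sub] using sub_ne_zero.2 hne
      have hf1 : ((u j) - 1).order = ((0 : ℕ) : ℕ∞) := by
        rw [PowerSeries.order_eq_nat]
        refine ⟨?_, by omega⟩
        simp [PowerSeries.coeff_zero_eq_constantCoeff, map_sub, h0]
      rw [Nat.cast_zero] at hgord hf1
      have hsum : (u j).order + (u j).order = (2 * μ : ℕ) := by
        have hL : ((PowerSeries.X : PowerSeries ℂ) ^ (2 * μ) * (u (j + 1) - u 1)).order
            = (2 * μ : ℕ) := by
          rw [PowerSeries.order_mul, PowerSeries.order_X_pow, hgord, add_zero]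
        have hR : ((u j) ^ 2 * ((u j) - 1)).order = (u j).order + (u j).order := by
          rw [PowerSeries.order_mul, sq, PowerSeries.order_mul, hf1, add_zero]
        rw [← hR, ← heq, hL]
      have hfin : (u j).order ≠ ⊤ :=
        ne_top_of_le_ne_top (ENat.coe_ne_top _) (hsum ▸ le_self_add)
      lift (u j).order to ℕ using hfin with n hn
      have hnn : n + n = 2 * μ := by exact_mod_cast hsum
      have hnμ : n = μ := by omega
      rw [hnμ] at hn
      obtain ⟨hc, hl⟩ := PowerSeries.order_eq_nat.1 hn.symm
      exact ⟨PowerSeries.coeff μ (u j), hc, rfl, hl⟩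
  · intro β hβ
    have hk := key_const μ hμ (u 1) (u (j + 1)) (u j) heq β hβ
    have hβ2 : β ^ 2 = PowerSeries.constantCoeff (u 1)
        - PowerSeries.constantCoeff (u (j + 1)) := by linear_combination hk
    refine ⟨hβ2, ?_, ?_⟩
    · intro h1
      have h : β ^ 2 = 1 := hβ2.trans h1
      have hz : (β - 1) * (β + 1) = 0 := by linear_combination h
      rcases mul_eq_zero.1 hz with h' | h'
      · exact Or.inl (sub_eq_zero.1 h')
      · exact Or.inr (eq_neg_of_add_eq_zero_left h')
    · intro h1
      have h : β ^ 2 = -1 := hβ2.trans h1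
      have hz : (β - Complex.I) * (β + Complex.I) = 0 := by
        linear_combination h - Complex.I_sq
      rcases mul_eq_zero.1 hz with h' | h'
      · exact Or.inl (sub_eq_zero.1 h')
      · exact Or.inr (by linear_combination h')
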